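/- Let m ≡ 9 (mod 12) with m ≥ 9, n = 2^m - 1, and v = 2^((m+1)/2) - 1. Then gcd(v, n) = 1, and for every integer a with 1 ≤ a ≤ 2^((m-1)/2) + 2, the binary digit sum of (a·v mod n) is congruent to 0, 1, or 5 modulo 6. -/

import Mathlib

lemma sdef (x : ℕ) : (Nat.digits 2 x).sum = x % 2 + (Nat.digits 2 (x / 2)).sum := by
  rcases Nat.eq_zero_or_pos x with h | h
  · simp [h]
  · rw [Nat.digits_def' (by norm_num : 1 < 2) h]
    simp

lemma split (h : ℕ) : ∀ x y : ℕ, x < 2 ^ h →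
    (Nat.digits 2 (x + 2 ^ h * y)).sum = (Nat.digits 2 x).sum + (Nat.digits 2 y).sum := by
  induction h with
  | zero => intro x y hx; interval_cases x; simp
  | succ h ih =>
    intro x y hx
    have hz : 2 ^ (h + 1) * y = 2 * (2 ^ h * y) := by ring
    have hx' : x < 2 * 2 ^ h := by rw [pow_succ] at hx; omega
    rw [sdef (x + 2 ^ (h + 1) * y), sdef x, hz]
    have e1 : (x + 2 * (2 ^ h * y)) % 2 = x % 2 := by omega
    have e2 : (x + 2 * (2 ^ h * y)) / 2 = x / 2 + 2 ^ h * y := by omega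
    rw [e1, e2, ih (x / 2) y (by omega)]
    omega

lemma compl (h : ℕ) : ∀ b : ℕ, b < 2 ^ h →
    (Nat.digits 2 b).sum + (Nat.digits 2 (2 ^ h - 1 - b)).sum = h := by
  induction h with
  | zero => intro b hb; interval_cases b; simp
  | succ h ih =>
    intro b hb
    have hp : 2 ^ (h + 1) = 2 ^ h * 2 := by ring
    have hpos : 0 < 2 ^ h := Nat.pow_pos (n := h) (by norm_num)
    rw [sdef b, sdef (2 ^ (h + 1) - 1 - b)]
    have e1 : b % 2 + (2 ^ (h + 1) - 1 - b) % 2 = 1 := by rw [hp]; omega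
    have e2 : (2 ^ (h + 1) - 1 - b) / 2 = 2 ^ h - 1 - (b / 2) := by rw [hp]; omega
    rw [e2]
    have := ih (b / 2) (by rw [hp] at hb; omega)
    omega

lemma spow (k : ℕ) : (Nat.digits 2 (2 ^ k)).sum = 1 := by
  have := split k 0 1 (Nat.pow_pos (n := k) (by norm_num))
  simpa using this

lemma sones (k : ℕ) : (Nat.digits 2 (2 ^ k - 1)).sum = k := by
  have := compl k 0 (Nat.pow_pos (n := k) (by norm_num))
  simpa using this

lemma stwo : (Nat.digits 2 2).sum = 1 := by
  simpa using spow 1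

theorem m9mod12_defSet (m : ℕ) (hm : 9 ≤ m) (h : m % 12 = 9) :
    Nat.gcd (2 ^ ((m + 1) / 2) - 1) (2 ^ m - 1) = 1 ∧
    ∀ a : ℕ, 1 ≤ a → a ≤ 2 ^ ((m - 1) / 2) + 2 →
      (Nat.digits 2 (a * (2 ^ ((m + 1) / 2) - 1) % (2 ^ m - 1))).sum % 6 = 0 ∨
      (Nat.digits 2 (a * (2 ^ ((m + 1) / 2) - 1) % (2 ^ m - 1))).sum % 6 = 1 ∨
      (Nat.digits 2 (a * (2 ^ ((m + 1) / 2) - 1) % (2 ^ m - 1))).sum % 6 = 5 := by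
  obtain ⟨q, rfl⟩ : ∃ q, m = 12 * q + 9 := ⟨m / 12, by omega⟩
  have e1 : (12 * q + 9 + 1) / 2 = 6 * q + 5 := by omega
  have e2 : (12 * q + 9 - 1) / 2 = 6 * q + 4 := by omega
  rw [e1, e2]
  set h1 : ℕ := 6 * q + 4 with hh1
  set h2 : ℕ := 6 * q + 5 with hh2
  have hph : (0:ℕ) < 2 ^ h1 := Nat.pow_pos (by norm_num)
  have hph2 : (0:ℕ) < 2 ^ h2 := Nat.pow_pos (by norm_num)
  have hpn : (0:ℕ) < 2 ^ (12 * q + 9) := Nat.pow_pos (by norm_num)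
  have hmm : 12 * q + 9 = h1 + h2 := by omega
  have hprod : 2 ^ h1 * 2 ^ h2 = 2 ^ (12 * q + 9) := by rw [← pow_add, hmm]
  have h21 : 2 ^ h2 = 2 * 2 ^ h1 := by
    rw [hh2, show 6 * q + 5 = h1 + 1 by omega, pow_succ]; ring
  have hle : 2 ^ h1 ≤ 2 ^ (12 * q + 9) := Nat.pow_le_pow_right (by norm_num) (by omega)
  have h1ge2 : 2 ≤ 2 ^ h1 := by
    calc 2 = 2 ^ 1 := rfl
    _ ≤ 2 ^ h1 := Nat.pow_le_pow_right (by norm_num) (by omega)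
  have hn : (2:ℕ) ^ (12 * q + 9) = 2 * 2 ^ h1 * 2 ^ h1 := by rw [← hprod, h21]; ring
  have h21' : (2:ℤ) ^ h2 = 2 * 2 ^ h1 := by exact_mod_cast h21
  have hn' : (2:ℤ) ^ (12 * q + 9) = 2 * 2 ^ h1 * 2 ^ h1 := by exact_mod_cast hn
  constructor
  · -- gcd part
    set g := Nat.gcd (2 ^ h2 - 1) (2 ^ (12 * q + 9) - 1) with hg
    have d1 : g ∣ 2 ^ h2 - 1 := Nat.gcd_dvd_left _ _
    have d2 : g ∣ 2 ^ (12 * q + 9) - 1 := Nat.gcd_dvd_right _ _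
    have d3 : g ∣ 2 ^ h1 * (2 ^ h2 - 1) := Dvd.dvd.mul_left d1 _
    have key : 2 ^ (12 * q + 9) - 1 - 2 ^ h1 * (2 ^ h2 - 1) = 2 ^ h1 - 1 := by
      rw [Nat.mul_sub, mul_one, hprod]; omega
    have d4 : g ∣ 2 ^ h1 - 1 := key ▸ Nat.dvd_sub d2 d3
    have d5 : g ∣ 2 * (2 ^ h1 - 1) := Dvd.dvd.mul_left d4 _
    have key2 : 2 ^ h2 - 1 - 2 * (2 ^ h1 - 1) = 1 := by omega
    have d6 : g ∣ 1 := key2 ▸ Nat.dvd_sub d1 d5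
    exact Nat.dvd_one.mp d6
  · intro a ha1 ha2
    rcases lt_trichotomy a (2 ^ h1 + 1) with hc | hc | hc
    · -- a ≤ 2^h1 : result ≡ 5
      have hale : a ≤ 2 ^ h1 := by omega
      have key : a * (2 ^ h2 - 1) = (2 ^ h2 - a) + 2 ^ h2 * (a - 1) := by
        zify [show a ≤ 2 ^ h2 by omega, show 1 ≤ 2 ^ h2 by omega, ha1]
        ring
      have hlt : a * (2 ^ h2 - 1) < 2 ^ (12 * q + 9) - 1 := by
        calc a * (2 ^ h2 - 1) ≤ 2 ^ h1 * (2 ^ h2 - 1) :=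
              Nat.mul_le_mul_right _ hale
          _ < 2 ^ (12 * q + 9) - 1 := by rw [Nat.mul_sub, mul_one, hprod]; omega
      rw [Nat.mod_eq_of_lt hlt, key,
        split h2 (2 ^ h2 - a) (a - 1) (by omega)]
      have hcmp := compl h2 (a - 1) (by omega)
      have heq : 2 ^ h2 - 1 - (a - 1) = 2 ^ h2 - a := by omega
      rw [heq] at hcmp
      right; right; omega
    · -- a = 2^h1 + 1 : result ≡ 1
      subst hc
      have key : (2 ^ h1 + 1) * (2 ^ h2 - 1) = (2 ^ (12 * q + 9) - 1) + 2 ^ h1 := by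
        zify [show 1 ≤ 2 ^ h2 by omega, show 1 ≤ 2 ^ (12 * q + 9) by omega]
        rw [h21', hn']
        ring
      have hrlt : 2 ^ h1 < 2 ^ (12 * q + 9) - 1 := by
        have : 2 ^ h1 + 2 ≤ 2 * 2 ^ h1 * 2 ^ h1 := by nlinarith
        omega
      rw [key, Nat.add_mod_left, Nat.mod_eq_of_lt hrlt, spow]
      right; left; rfl
    · -- a = 2^h1 + 2 : result ≡ 5
      have hc2 : a = 2 ^ h1 + 2 := by omega
      subst hc2
      have key : (2 ^ h1 + 2) * (2 ^ h2 - 1) =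
          (2 ^ (12 * q + 9) - 1) + ((2 ^ h1 - 1) + 2 ^ h1 * 2) := by
        zify [show 1 ≤ 2 ^ h2 by omega, show 1 ≤ 2 ^ (12 * q + 9) by omega,
          show 1 ≤ 2 ^ h1 by omega]
        rw [h21', hn']
        ring
      have hrlt : (2 ^ h1 - 1) + 2 ^ h1 * 2 < 2 ^ (12 * q + 9) - 1 := by
        have : 2 ^ h1 * 2 + 2 ^ h1 + 1 ≤ 2 * 2 ^ h1 * 2 ^ h1 := by nlinarith
        omega
      rw [key, Nat.add_mod_left, Nat.mod_eq_of_lt hrlt,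
        split h1 (2 ^ h1 - 1) 2 (by omega), sones, stwo]
      right; right; omega
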